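/- For every fair division instance with n agents having monotone subadditive valuations v_1,...,v_n over m indivisible goods, there exists an EF1 allocation B = (B_1,...,B_n) with social welfare ∑_{i∈[n]} v_i(B_i) ≥ (1/(2n)) ∑_{i∈[n]} v_i([m]). -/

import Mathlib

open Finset

namespace EF1Aux

variable {n m : ℕ}

/-- `B` is a partition of the goods in `S` (bundles pairwise disjoint, union `S`). -/
def Part (S : Finset (Fin m)) (B : Fin n → Finset (Fin m)) : Prop :=
  (∀ a b : Fin n, a ≠ b → Disjoint (B a) (B b)) ∧ Finset.univ.biUnion B = S

/-- Strong EF1: every nonempty bundle has a single good whose removal kills envy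
of *every* agent. -/
def Strong (v : Fin n → Finset (Fin m) → ℝ) (B : Fin n → Finset (Fin m)) : Prop :=
  ∀ j, (B j).Nonempty → ∃ γ ∈ B j, ∀ i, v i (B j \ {γ}) ≤ v i (B i)

/-- Social welfare. -/
def SW (v : Fin n → Finset (Fin m) → ℝ) (B : Fin n → Finset (Fin m)) : ℝ :=
  ∑ i, v i (B i)

lemma vnonneg (v : Fin n → Finset (Fin m) → ℝ)
    (hmono : ∀ i, ∀ A B : Finset (Fin m), A ⊆ B → v i A ≤ v i B)
    (h0 : ∀ i, v i ∅ = 0) (i : Fin n) (A : Finset (Fin m)) : 0 ≤ v i A := by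
  have := hmono i ∅ A (Finset.empty_subset A)
  rwa [h0] at this

lemma v_biUnion_le (v : Fin n → Finset (Fin m) → ℝ)
    (hsub : ∀ i, ∀ A B : Finset (Fin m), v i (A ∪ B) ≤ v i A + v i B)
    (h0 : ∀ i, v i ∅ = 0) (i : Fin n) (B : Fin n → Finset (Fin m))
    (s : Finset (Fin n)) :
    v i (s.biUnion B) ≤ ∑ j ∈ s, v i (B j) := by
  classical
  induction s using Finset.induction_on with
  | empty => simp [h0 i]
  | @insert a s ha ih =>
      rw [Finset.biUnion_insert, Finset.sum_insert ha]
      calc v i (B a ∪ s.biUnion B) ≤ v i (B a) + v i (s.biUnion B) := hsub i _ _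
        _ ≤ v i (B a) + ∑ j ∈ s, v i (B j) := by linarith

/-- Among strong-EF1 partitions of `S` with value floors `φ`, there is one with an
unenvied agent (envy-cycle elimination via welfare-maximality). -/
lemma exists_unenvied (v : Fin n → Finset (Fin m) → ℝ) (hn : 0 < n)
    (S : Finset (Fin m)) (φ : Fin n → ℝ)
    (hne : ∃ D, Part S D ∧ Strong v D ∧ ∀ i, φ i ≤ v i (D i)) :
    ∃ D, (Part S D ∧ Strong v D ∧ ∀ i, φ i ≤ v i (D i)) ∧
      ∃ k, ∀ i, v i (D k) ≤ v i (D i) := by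
  classical
  set pred : (Fin n → Finset (Fin m)) → Prop :=
    fun D => Part S D ∧ Strong v D ∧ ∀ i, φ i ≤ v i (D i) with hpred
  set s : Finset (Fin n → Finset (Fin m)) := Finset.univ.filter pred with hs
  have hsne : s.Nonempty := by
    obtain ⟨D, hD⟩ := hne
    exact ⟨D, by simp [hs, Finset.mem_filter, hpred, hD]; exact hD⟩
  obtain ⟨D, hDs, hmax⟩ := s.exists_max_image (fun D => SW v D) hsne
  have hD : pred D := (Finset.mem_filter.mp hDs).2
  refine ⟨D, hD, ?_⟩
  by_contra hk
  push_neg at hk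
  choose f hf using hk
  -- hf : ∀ k, v (f k) (D (f k)) < v (f k) (D k)
  set x0 : Fin n := ⟨0, hn⟩ with hx0
  obtain ⟨a, b, hab, hfab⟩ : ∃ a b : ℕ, a < b ∧ f^[a] x0 = f^[b] x0 := by
    obtain ⟨a, b, hne', heq⟩ := Fintype.exists_ne_map_eq_of_card_lt
      (fun k : Fin (n + 1) => f^[(k : ℕ)] x0) (by simp)
    rcases Ne.lt_or_gt hne' with h | h
    · exact ⟨a, b, h, heq⟩
    · exact ⟨b, a, h, heq.symm⟩
  set c : Fin n := f^[a] x0 with hc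
  have hper : ∃ q, 0 < q ∧ f^[q] c = c := by
    refine ⟨b - a, by omega, ?_⟩
    have h1 : f^[b - a] (f^[a] x0) = f^[(b - a) + a] x0 := by
      rw [Function.iterate_add_apply]
    rw [hc, h1, show b - a + a = b by omega, ← hfab]
  set p : ℕ := Nat.find hper with hp
  obtain ⟨hp0, hpc⟩ := Nat.find_spec hper
  have hmin : ∀ q, 0 < q → q < p → f^[q] c ≠ c := by
    intro q h1 h2 hq
    exact Nat.find_min hper h2 ⟨h1, hq⟩
  have huniq : ∀ s t : ℕ, s < p → t < p → f^[s] c = f^[t] c → s = t := by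
    have key : ∀ s t : ℕ, s < t → t < p → f^[s] c ≠ f^[t] c := by
      intro s t hst htp heq'
      have h2 : f^[(p - t) + s] c = c := by
        rw [Function.iterate_add_apply, heq', ← Function.iterate_add_apply,
          show p - t + t = p by omega]
        exact hpc
      exact hmin _ (by omega) (by omega) h2
    intro s t hs ht heq'
    rcases lt_trichotomy s t with h | h | h
    · exact absurd heq' (key s t h ht)
    · exact h
    · exact absurd heq'.symm (key t s h hs)
  set pm : ℕ → ℕ := fun s => (s + p - 1) % p with hpmdef
  have hpm_lt : ∀ s, pm s < p := fun s => Nat.mod_lt _ hp0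
  have hpm0 : pm 0 = p - 1 := by
    simp only [hpmdef, Nat.zero_add]
    exact Nat.mod_eq_of_lt (by omega)
  have hpm_succ : ∀ s : ℕ, s < p → pm (s + 1) = s := by
    intro s hsp
    simp only [hpmdef]
    rw [show s + 1 + p - 1 = s + p by omega, Nat.add_mod_right]
    exact Nat.mod_eq_of_lt hsp
  have hfpm : ∀ s : ℕ, s < p → f (f^[pm s] c) = f^[s] c := by
    intro s hs
    have h1 : f (f^[pm s] c) = f^[pm s + 1] c := (Function.iterate_succ_apply' f _ c).symm
    rw [h1]
    rcases Nat.eq_zero_or_pos s with rfl | hs'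
    · rw [hpm0, show p - 1 + 1 = p by omega, hpc]
      simp
    · obtain ⟨s', rfl⟩ : ∃ s', s = s' + 1 := ⟨s - 1, by omega⟩
      rw [hpm_succ s' (by omega)]
  set π : Fin n → Fin n :=
    fun i => if h : ∃ s, s < p ∧ f^[s] c = i then f^[pm h.choose] c else i with hπdef
  have hπ_orbit : ∀ s : ℕ, s < p → π (f^[s] c) = f^[pm s] c := by
    intro s hs
    have hex : ∃ t, t < p ∧ f^[t] c = f^[s] c := ⟨s, hs, rfl⟩
    have hch := hex.choose_spec
    have : hex.choose = s := huniq _ _ hch.1 hs hch.2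
    simp only [hπdef, dif_pos hex]
    rw [this]
  have hstrict : ∀ i, (∃ s, s < p ∧ f^[s] c = i) → v i (D i) < v i (D (π i)) := by
    rintro i ⟨s, hs, rfl⟩
    rw [hπ_orbit s hs]
    have h1 := hf (f^[pm s] c)
    rwa [hfpm s hs] at h1
  have hle : ∀ i, v i (D i) ≤ v i (D (π i)) := by
    intro i
    by_cases h : ∃ s, s < p ∧ f^[s] c = i
    · exact (hstrict i h).le
    · rw [hπdef]; simp only [dif_neg h]; exact le_refl _
  have hπinj : Function.Injective π := by
    intro i j hij
    by_cases hi : ∃ s, s < p ∧ f^[s] c = i <;>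
      by_cases hj : ∃ s, s < p ∧ f^[s] c = j
    · obtain ⟨s, hs, rfl⟩ := hi
      obtain ⟨t, ht, rfl⟩ := hj
      rw [hπ_orbit s hs, hπ_orbit t ht] at hij
      have hpm_eq : pm s = pm t := huniq _ _ (hpm_lt s) (hpm_lt t) hij
      have : s = t := by
        rcases Nat.eq_zero_or_pos s with rfl | hs' <;>
          rcases Nat.eq_zero_or_pos t with rfl | ht'
        · rfl
        · exfalso
          obtain ⟨t', rfl⟩ : ∃ t', t = t' + 1 := ⟨t - 1, by omega⟩
          rw [hpm0, hpm_succ t' (by omega)] at hpm_eq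
          omega
        · exfalso
          obtain ⟨s', rfl⟩ : ∃ s', s = s' + 1 := ⟨s - 1, by omega⟩
          rw [hpm0, hpm_succ s' (by omega)] at hpm_eq
          omega
        · obtain ⟨s', rfl⟩ : ∃ s', s = s' + 1 := ⟨s - 1, by omega⟩
          obtain ⟨t', rfl⟩ : ∃ t', t = t' + 1 := ⟨t - 1, by omega⟩
          rw [hpm_succ s' (by omega), hpm_succ t' (by omega)] at hpm_eq
          omega
      rw [this]
    · exfalso
      obtain ⟨s, hs, rfl⟩ := hi
      rw [hπ_orbit s hs] at hij
      have : π j = j := by rw [hπdef]; simp only [dif_neg hj]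
      rw [this] at hij
      exact hj ⟨pm s, hpm_lt s, hij⟩
    · exfalso
      obtain ⟨t, ht, rfl⟩ := hj
      rw [hπ_orbit t ht] at hij
      have : π i = i := by rw [hπdef]; simp only [dif_neg hi]
      rw [this] at hij
      exact hi ⟨pm t, hpm_lt t, hij.symm⟩
    · have h1 : π i = i := by rw [hπdef]; simp only [dif_neg hi]
      have h2 : π j = j := by rw [hπdef]; simp only [dif_neg hj]
      rw [h1, h2] at hij
      exact hij
  have hπbij : Function.Bijective π := Finite.injective_iff_bijective.mp hπinj
  set D' : Fin n → Finset (Fin m) := fun i => D (π i) with hD'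
  have hD'pred : pred D' := by
    refine ⟨⟨?_, ?_⟩, ?_, ?_⟩
    · intro a b hab
      exact hD.1.1 _ _ (hπinj.ne hab)
    · rw [← hD.1.2]
      ext x
      simp only [Finset.mem_biUnion, Finset.mem_univ, true_and, hD']
      constructor
      · rintro ⟨i, hx⟩; exact ⟨π i, hx⟩
      · rintro ⟨j, hx⟩
        obtain ⟨i, rfl⟩ := hπbij.2 j
        exact ⟨i, hx⟩
    · intro j hj
      obtain ⟨γ, hγ, hb⟩ := hD.2.1 (π j) hj
      exact ⟨γ, hγ, fun i => (hb i).trans (hle i)⟩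
    · intro i
      exact (hD.2.2 i).trans (hle i)
  have hlt : SW v D < SW v D' := by
    refine Finset.sum_lt_sum (fun i _ => hle i) ⟨c, Finset.mem_univ c, ?_⟩
    exact hstrict c ⟨0, hp0, rfl⟩
  have : SW v D' ≤ SW v D :=
    hmax D' (Finset.mem_filter.mpr ⟨Finset.mem_univ _, hD'pred⟩)
  linarith

/-- Lipton-style extension: any partial strong-EF1 allocation (of `univ \ R`) extends
to a complete strong-EF1 allocation without decreasing any agent's value. -/
lemma ext_lemma (v : Fin n → Finset (Fin m) → ℝ) (hn : 0 < n)
    (hmono : ∀ i, ∀ A B : Finset (Fin m), A ⊆ B → v i A ≤ v i B) :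
    ∀ (N : ℕ) (R : Finset (Fin m)) (P : Fin n → Finset (Fin m)), R.card = N →
      Part (Finset.univ \ R) P → Strong v P →
      ∃ B, Part (Finset.univ : Finset (Fin m)) B ∧ Strong v B ∧
        ∀ i, v i (P i) ≤ v i (B i) := by
  classical
  intro N
  induction N with
  | zero =>
      intro R P hcard hpart hstrong
      rw [Finset.card_eq_zero] at hcard
      subst hcard
      rw [Finset.sdiff_empty] at hpart
      exact ⟨P, hpart, hstrong, fun i => le_refl _⟩
  | succ N ih =>
      intro R P hcard hpart hstrong
      have hRne : R.Nonempty := Finset.card_pos.mp (by omega)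
      obtain ⟨g, hgR⟩ := hRne
      obtain ⟨D, ⟨hDpart, hDstrong, hDfl⟩, k, hk⟩ :=
        exists_unenvied v hn (Finset.univ \ R) (fun i => v i (P i))
          ⟨P, hpart, hstrong, fun i => le_refl _⟩
      have hDsub : ∀ j, D j ⊆ Finset.univ \ R := by
        intro j
        rw [← hDpart.2]
        exact Finset.subset_biUnion_of_mem D (Finset.mem_univ j)
      have hgD : ∀ j, g ∉ D j := by
        intro j h
        have := hDsub j h
        rw [Finset.mem_sdiff] at this
        exact this.2 hgR
      set P' : Fin n → Finset (Fin m) := Function.update D k (insert g (D k)) with hP'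
      have hP'k : P' k = insert g (D k) := Function.update_self k _ D
      have hP'ne : ∀ j, j ≠ k → P' j = D j := fun j hj => Function.update_of_ne hj _ D
      have hsubP' : ∀ i, D i ⊆ P' i := by
        intro i
        by_cases hik : i = k
        · subst hik; rw [hP'k]; exact Finset.subset_insert _ _
        · rw [hP'ne i hik]
      have hmonoP' : ∀ i, v i (D i) ≤ v i (P' i) := fun i => hmono i _ _ (hsubP' i)
      have hpart' : Part (Finset.univ \ R.erase g) P' := by
        constructor
        · intro x y hxy
          by_cases hx : x = k <;> by_cases hy : y = k
          · exact absurd (hx.trans hy.symm) hxy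
          · subst hx
            rw [hP'k, hP'ne y hy]
            rw [Finset.disjoint_insert_left]
            exact ⟨hgD y, hDpart.1 _ _ hxy⟩
          · subst hy
            rw [hP'k, hP'ne x hx]
            rw [Finset.disjoint_insert_right]
            exact ⟨hgD x, hDpart.1 _ _ hxy⟩
          · rw [hP'ne x hx, hP'ne y hy]
            exact hDpart.1 _ _ hxy
        · ext x
          have hDx : (∃ j, x ∈ D j) ↔ (x ∈ Finset.univ \ R) := by
            rw [← hDpart.2]
            simp [Finset.mem_biUnion]
          have hmem : x ∈ Finset.univ.biUnion P' ↔ (x = g ∨ ∃ j, x ∈ D j) := by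
            simp only [Finset.mem_biUnion, Finset.mem_univ, true_and]
            constructor
            · rintro ⟨j, hj⟩
              by_cases hjk : j = k
              · rw [hjk, hP'k, Finset.mem_insert] at hj
                rcases hj with rfl | hj
                · exact Or.inl rfl
                · exact Or.inr ⟨k, hj⟩
              · rw [hP'ne j hjk] at hj
                exact Or.inr ⟨j, hj⟩
            · rintro (rfl | ⟨j, hj⟩)
              · exact ⟨k, by rw [hP'k]; exact Finset.mem_insert_self _ _⟩
              · exact ⟨j, hsubP' j hj⟩
          rw [hmem, hDx]
          by_cases hxg : x = g
          · subst hxg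
            simp [Finset.mem_sdiff, Finset.notMem_erase]
          · simp only [Finset.mem_sdiff, Finset.mem_univ, true_and, Finset.mem_erase, hxg]
            tauto
      have hstrong' : Strong v P' := by
        intro j hj
        by_cases hjk : j = k
        · refine ⟨g, ?_, ?_⟩
          · rw [hjk, hP'k]
            exact Finset.mem_insert_self _ _
          · intro i
            have heq : P' j \ {g} = D k := by
              rw [hjk, hP'k, ← Finset.erase_eq, Finset.erase_insert (hgD k)]
            rw [heq]
            exact (hk i).trans (hmonoP' i)
        · rw [hP'ne j hjk] at hj ⊢
          obtain ⟨γ, hγ, hb⟩ := hDstrong j hj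
          exact ⟨γ, hγ, fun i => (hb i).trans (hmonoP' i)⟩
      have hcard' : (R.erase g).card = N := by
        rw [Finset.card_erase_of_mem hgR, hcard]
        omega
      obtain ⟨B, hBpart, hBstrong, hBfl⟩ := ih (R.erase g) P' hcard' hpart' hstrong'
      refine ⟨B, hBpart, hBstrong, fun i => ?_⟩
      exact (hDfl i).trans ((hmonoP' i).trans (hBfl i))

end EF1Aux

/-- For every fair division instance with `n` agents having monotone
subadditive valuations (normalized at ∅) over `m` indivisible goods, there exists an
EF1 allocation `B` with social welfare at least `(1/(2n)) ∑ i, v i [m]`. -/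
theorem exists_ef1_allocation_welfare_ge_avg
    (n m : ℕ) (hn : 0 < n)
    (v : Fin n → Finset (Fin m) → ℝ)
    (hmono : ∀ i, ∀ A B : Finset (Fin m), A ⊆ B → v i A ≤ v i B)
    (hsub : ∀ i, ∀ A B : Finset (Fin m), v i (A ∪ B) ≤ v i A + v i B)
    (h0 : ∀ i, v i ∅ = 0) :
    ∃ B : Fin n → Finset (Fin m),
      (∀ a b : Fin n, a ≠ b → Disjoint (B a) (B b)) ∧
      Finset.univ.biUnion B = Finset.univ ∧
      (∀ i j : Fin n, (B j).Nonempty → ∃ g ∈ B j, v i (B j \ {g}) ≤ v i (B i)) ∧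
      (1 / (2 * (n : ℝ))) * ∑ i, v i Finset.univ ≤ ∑ i, v i (B i) := by
  classical
  haveI : NeZero n := ⟨hn.ne'⟩
  open EF1Aux in
  -- there exists at least one complete strong-EF1 allocation
  have hexists : ∃ B, Part (Finset.univ : Finset (Fin m)) B ∧ Strong v B := by
    obtain ⟨B, hp, hs, -⟩ := ext_lemma v hn hmono (Finset.univ : Finset (Fin m)).card
      Finset.univ (fun _ => (∅ : Finset (Fin m))) rfl
      (by
        constructor
        · intro a b _; simp
        · rw [Finset.sdiff_self]
          ext x
          simp)
      (by intro j hj; simp at hj)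
    exact ⟨B, hp, hs⟩
  -- take one maximizing social welfare
  set pred : (Fin n → Finset (Fin m)) → Prop :=
    fun B => Part (Finset.univ : Finset (Fin m)) B ∧ Strong v B with hpreddef
  set s : Finset (Fin n → Finset (Fin m)) := Finset.univ.filter pred with hsdef
  have hsne : s.Nonempty := by
    obtain ⟨B, hB⟩ := hexists
    exact ⟨B, by simp [hsdef, Finset.mem_filter, hpreddef, hB]; exact hB⟩
  obtain ⟨B, hBs, hmax⟩ := s.exists_max_image (fun B => EF1Aux.SW v B) hsne
  have hB : pred B := (Finset.mem_filter.mp hBs).2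
  obtain ⟨hBpart, hBstrong⟩ := hB
  have hmax' : ∀ C, Part (Finset.univ : Finset (Fin m)) C → Strong v C →
      EF1Aux.SW v C ≤ EF1Aux.SW v B := by
    intro C h1 h2
    exact hmax C (by simp [hsdef, Finset.mem_filter, hpreddef]; exact ⟨h1, h2⟩)
  -- the common-witness goods
  set w : Fin n → Fin n → ℝ :=
    fun i j => if h : (B j).Nonempty then v i {(hBstrong j h).choose} else 0 with hwdef
  have hnonneg := vnonneg v hmono h0
  -- Step 1 : per-agent chain inequality
  have hchain : ∀ i j, v i (B j) ≤ v i (B i) + w i j := by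
    intro i j
    by_cases hbj : (B j).Nonempty
    · obtain ⟨hγmem, hγ⟩ := (hBstrong j hbj).choose_spec
      set γ := (hBstrong j hbj).choose
      have hunion : (B j \ {γ}) ∪ {γ} = B j :=
        Finset.sdiff_union_of_subset (Finset.singleton_subset_iff.mpr hγmem)
      have h1 : v i (B j) ≤ v i (B j \ {γ}) + v i {γ} := by
        calc v i (B j) = v i ((B j \ {γ}) ∪ {γ}) := by rw [hunion]
          _ ≤ v i (B j \ {γ}) + v i {γ} := hsub i _ _
      have h2 : v i (B j \ {γ}) ≤ v i (B i) := hγ i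
      have h3 : w i j = v i {γ} := by rw [hwdef]; simp only [dif_pos hbj]; rfl
      rw [h3]; linarith
    · have h3 : w i j = 0 := by
        simp only [hwdef]
        rw [dif_neg hbj]
      have hbj' : B j = ∅ := Finset.not_nonempty_iff_eq_empty.mp hbj
      rw [hbj', h0 i, h3, add_zero]
      exact hnonneg i (B i)
  -- Step 2 : each cyclic-shift matching seeds a strong-EF1 allocation
  have hshift : ∀ k : Fin n, ∑ i, w i (i + k) ≤ EF1Aux.SW v B := by
    intro k
    set Sk : Fin n → Finset (Fin m) :=
      fun i => if h : (B (i + k)).Nonempty then {(hBstrong (i + k) h).choose} else ∅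
      with hSkdef
    have hSkval : ∀ i, v i (Sk i) = w i (i + k) := by
      intro i
      by_cases h : (B (i + k)).Nonempty
      · rw [hSkdef, hwdef]; simp only [dif_pos h]
      · rw [hSkdef, hwdef]; simp only [dif_neg h]; exact h0 i
    have hSkmem : ∀ i, ∀ x ∈ Sk i, x ∈ B (i + k) := by
      intro i x hx
      rw [hSkdef] at hx
      by_cases h : (B (i + k)).Nonempty
      · simp only [dif_pos h, Finset.mem_singleton] at hx
        rw [hx]
        exact (hBstrong (i + k) h).choose_spec.1
      · simp [dif_neg h] at hx
    have hSkdisj : ∀ a b : Fin n, a ≠ b → Disjoint (Sk a) (Sk b) := by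
      intro a b hab
      rw [Finset.disjoint_left]
      intro x hxa hxb
      have h1 := hSkmem a x hxa
      have h2 := hSkmem b x hxb
      have hne' : a + k ≠ b + k := fun h => hab (by
        have := congrArg (fun t => t - k) h
        simpa using this)
      exact (Finset.disjoint_left.mp (hBpart.1 _ _ hne')) h1 h2
    set Rk : Finset (Fin m) := Finset.univ \ Finset.univ.biUnion Sk with hRkdef
    have hpartSk : Part (Finset.univ \ Rk) Sk := by
      refine ⟨hSkdisj, ?_⟩
      rw [hRkdef, sdiff_sdiff_right_self, inf_eq_inter, Finset.univ_inter]
    have hstrongSk : Strong v Sk := by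
      intro j hj
      by_cases h : (B (j + k)).Nonempty
      · refine ⟨(hBstrong (j + k) h).choose, ?_, ?_⟩
        · rw [hSkdef]; simp only [dif_pos h]; exact Finset.mem_singleton_self _
        · intro i
          have : Sk j \ {(hBstrong (j + k) h).choose} = ∅ := by
            rw [hSkdef]; simp only [dif_pos h]; simp
          rw [this, h0 i]
          exact hnonneg i _
      · exfalso
        rw [hSkdef] at hj
        simp only [dif_neg h] at hj
        exact Finset.not_nonempty_empty hj
    obtain ⟨C, hCpart, hCstrong, hCfl⟩ :=
      ext_lemma v hn hmono Rk.card Rk Sk rfl hpartSk hstrongSk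
    calc ∑ i, w i (i + k) = ∑ i, v i (Sk i) := by
          refine Finset.sum_congr rfl fun i _ => (hSkval i).symm
      _ ≤ ∑ i, v i (C i) := Finset.sum_le_sum fun i _ => hCfl i
      _ ≤ EF1Aux.SW v B := hmax' C hCpart hCstrong
  -- Step 3 : sum the shift bounds
  have hwsum : ∑ i, ∑ j, w i j ≤ (n : ℝ) * EF1Aux.SW v B := by
    have hre : ∀ i : Fin n, ∑ j, w i j = ∑ k, w i (i + k) := by
      intro i
      exact (Fintype.sum_equiv (Equiv.addLeft i) (fun k => w i (i + k))
        (fun j => w i j) (fun k => rfl)).symm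
    calc ∑ i, ∑ j, w i j = ∑ i, ∑ k, w i (i + k) := Finset.sum_congr rfl fun i _ => hre i
      _ = ∑ k, ∑ i, w i (i + k) := Finset.sum_comm
      _ ≤ ∑ _k : Fin n, EF1Aux.SW v B := Finset.sum_le_sum fun k _ => hshift k
      _ = (n : ℝ) * EF1Aux.SW v B := by
          rw [Finset.sum_const, Finset.card_univ, Fintype.card_fin, nsmul_eq_mul]
  -- Step 4 : total bound
  have htotal : ∑ i, v i (Finset.univ : Finset (Fin m)) ≤
      2 * (n : ℝ) * EF1Aux.SW v B := by
    have hper : ∀ i, v i (Finset.univ : Finset (Fin m)) ≤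
        (n : ℝ) * v i (B i) + ∑ j, w i j := by
      intro i
      have h1 : v i (Finset.univ : Finset (Fin m)) ≤ ∑ j, v i (B j) := by
        have := v_biUnion_le v hsub h0 i B Finset.univ
        rwa [hBpart.2] at this
      have h2 : ∑ j, v i (B j) ≤ ∑ j : Fin n, (v i (B i) + w i j) :=
        Finset.sum_le_sum fun j _ => hchain i j
      have h3 : ∑ j : Fin n, (v i (B i) + w i j) = (n : ℝ) * v i (B i) + ∑ j, w i j := by
        rw [Finset.sum_add_distrib, Finset.sum_const, Finset.card_univ, Fintype.card_fin,
          nsmul_eq_mul]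
      linarith
    calc ∑ i, v i (Finset.univ : Finset (Fin m))
        ≤ ∑ i, ((n : ℝ) * v i (B i) + ∑ j, w i j) := Finset.sum_le_sum fun i _ => hper i
      _ = (n : ℝ) * EF1Aux.SW v B + ∑ i, ∑ j, w i j := by
          rw [Finset.sum_add_distrib, ← Finset.mul_sum]; rfl
      _ ≤ (n : ℝ) * EF1Aux.SW v B + (n : ℝ) * EF1Aux.SW v B := by linarith
      _ = 2 * (n : ℝ) * EF1Aux.SW v B := by ring
  refine ⟨B, hBpart.1, hBpart.2, ?_, ?_⟩
  · intro i j hj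
    obtain ⟨γ, hγ, hb⟩ := hBstrong j hj
    exact ⟨γ, hγ, hb i⟩
  · have h2n : (0 : ℝ) < 2 * (n : ℝ) := by positivity
    rw [div_mul_eq_mul_div, one_mul, div_le_iff₀ h2n]
    calc ∑ i, v i (Finset.univ : Finset (Fin m)) ≤ 2 * (n : ℝ) * EF1Aux.SW v B := htotal
      _ = (∑ i, v i (B i)) * (2 * (n : ℝ)) := by rw [EF1Aux.SW]; ring
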